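/- Let (Z̄_i)_{i∈ℤ} be an i.i.d. sequence taking value 1 with probability p ∈ (0,1) and ⋆ otherwise, let ℓ̄ : ℕ → ℕ be nondecreasing, and define m̄_i = inf{k ≥ 0 : Z̄_{i-k-1} = 1}, L̄_i = 0 if Z̄_i = 1 and L̄_i = m̄_i + 1 + ℓ̄(m̄_i) otherwise. Define the chain D^{(0)} by D^{(0)}_i = 0 for i ≤ 0 and D^{(0)}_i = max(i - i* - L̄_i, 0) for i ≥ 1, where i* = max{l < i : D^{(0)}_l = 0}. Let ζ be the first time i ≥ 1 with D^{(0)}_i = 0. Then for every integer M ≥ 1, P(ζ < ∞) ≤ p^M · sum_{i ≥ M-1} (1-p)^{ℓ̄⁻¹(i)} + (1 - p^M), where ℓ̄⁻¹(i) = inf{k ≥ 1 : ℓ̄(k) > i}. -/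

import Mathlib

open scoped Classical
open MeasureTheory ProbabilityTheory

/-- `b ^ (ℓ̄⁻¹ i)` where `ℓ̄⁻¹(i) = inf{k ≥ 1 : ℓ̄(k) > i}`, with the convention
that the value is `0` when the set is empty (i.e. `ℓ̄⁻¹(i) = +∞`). -/
noncomputable def powInvBar (b : ℝ) (lbar : ℕ → ℕ) (i : ℕ) : ℝ :=
  if _h : ∃ k, 1 ≤ k ∧ i < lbar k then b ^ sInf {k | 1 ≤ k ∧ i < lbar k} else 0

/-- For the auxiliary chain `D⁽⁰⁾` driven by an i.i.d. `{1,⋆}` sequence `Z̄`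
(`true` = `1`) with success probability `p`, the return probability to `0`
satisfies, for every `M ≥ 1`,
`P(ζ < ∞) ≤ p^M ∑_{i ≥ M-1} (1-p)^{ℓ̄⁻¹(i)} + (1 - p^M)`. -/
theorem stmt_3 {Ω : Type*} [MeasurableSpace Ω] (P : Measure Ω)
    [IsProbabilityMeasure P] (p : ℝ) (hp : p ∈ Set.Ioo (0 : ℝ) 1)
    (Zbar : ℤ → Ω → Bool) (hmeas : ∀ i, Measurable (Zbar i))
    (hiid : iIndepFun Zbar P)
    (hlaw : ∀ i, P {ω | Zbar i ω = true} = ENNReal.ofReal p)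
    (ℓbar : ℕ → ℕ) (hℓmono : Monotone ℓbar)
    (mbar : ℤ → Ω → ℕ)
    (hmbar : ∀ i ω, mbar i ω = sInf {k | Zbar (i - k - 1) ω = true})
    (Lbar : ℤ → Ω → ℕ)
    (hLbar : ∀ i ω, Lbar i ω =
      if Zbar i ω then 0 else mbar i ω + 1 + ℓbar (mbar i ω))
    (D : ℕ → Ω → ℕ) (hD0 : ∀ ω, D 0 ω = 0)
    (hDrec : ∀ i ω, 1 ≤ i →
      D i ω = i - sSup {l | l < i ∧ D l ω = 0} - Lbar (i : ℤ) ω)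
    (M : ℕ) (hM : 1 ≤ M) :
    P {ω | ∃ i, 1 ≤ i ∧ D i ω = 0} ≤
      ENNReal.ofReal (p ^ M) *
        (∑' i : ℕ, ENNReal.ofReal (powInvBar (1 - p) ℓbar (i + (M - 1)))) +
      ENNReal.ofReal (1 - p ^ M) := by
  obtain ⟨hp0, hp1⟩ := hp
  set bs : ℤ → Bool := fun t => decide (t ≤ (M : ℤ)) with hbs
  set n : ℕ → ℕ := fun i => sInf {k | 1 ≤ k ∧ i + (M - 1) < ℓbar k} with hn
  set Fi : ℕ → Finset ℤ := fun i =>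
    Finset.Icc (1 : ℤ) M ∪ Finset.Icc ((i : ℤ) + M + 1) ((i : ℤ) + M + (n i)) with hFi
  set G : ℕ → Set Ω := fun i =>
    if ∃ k, 1 ≤ k ∧ i + (M - 1) < ℓbar k then
      ⋂ t ∈ Fi i, Zbar t ⁻¹' {bs t}
    else ∅ with hG
  set A : Set Ω := ⋂ t ∈ Finset.Icc (1 : ℤ) (M : ℤ), Zbar t ⁻¹' {true} with hAdef
  have cardM : (Finset.Icc (1 : ℤ) (M : ℤ)).card = M := by
    rw [Int.card_Icc]; omega
  have htrue : ∀ t : ℤ, P (Zbar t ⁻¹' {true}) = ENNReal.ofReal p := by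
    intro t; rw [← hlaw t]; rfl
  have hfalse : ∀ t : ℤ, P (Zbar t ⁻¹' {false}) = ENNReal.ofReal (1 - p) := by
    intro t
    have h1 : Zbar t ⁻¹' {false} = (Zbar t ⁻¹' {true})ᶜ := by
      ext ω; simp
    rw [h1, measure_compl ((hmeas t) (measurableSet_singleton _)) (measure_ne_top _ _),
      htrue t, measure_univ, ← ENNReal.ofReal_one, ← ENNReal.ofReal_sub _ hp0.le]
  have hblock : ∀ (S : Finset ℤ) (b : ℤ → Bool),
      P (⋂ t ∈ S, Zbar t ⁻¹' {b t}) = ∏ t ∈ S, P (Zbar t ⁻¹' {b t}) := by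
    intro S b
    exact hiid.meas_biInter (fun t _ => ⟨{b t}, measurableSet_singleton _, rfl⟩)
  have hPA : P A = ENNReal.ofReal (p ^ M) := by
    rw [hAdef, hblock (Finset.Icc (1 : ℤ) (M : ℤ)) (fun _ => true),
      Finset.prod_congr rfl (fun t _ => htrue t), Finset.prod_const, cardM,
      ENNReal.ofReal_pow hp0.le]
  have hA_meas : MeasurableSet A := by
    exact Finset.measurableSet_biInter _ (fun t _ => (hmeas t) (measurableSet_singleton _))
  have hPAc : P Aᶜ = ENNReal.ofReal (1 - p ^ M) := by
    rw [measure_compl hA_meas (measure_ne_top _ _), measure_univ, hPA,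
      ENNReal.ofReal_sub 1 (pow_nonneg hp0.le M), ENNReal.ofReal_one]
  have hPG : ∀ i, P (G i) =
      ENNReal.ofReal (p ^ M) * ENNReal.ofReal (powInvBar (1 - p) ℓbar (i + (M - 1))) := by
    intro i
    by_cases h : ∃ k, 1 ≤ k ∧ i + (M - 1) < ℓbar k
    · have hGi : G i = ⋂ t ∈ Fi i, Zbar t ⁻¹' {bs t} := by
        simp only [hG]; exact if_pos h
      have hpow : powInvBar (1 - p) ℓbar (i + (M - 1)) = (1 - p) ^ n i := by
        unfold powInvBar
        rw [dif_pos h]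
      have hdisj : Disjoint (Finset.Icc (1 : ℤ) (M : ℤ))
          (Finset.Icc ((i : ℤ) + M + 1) ((i : ℤ) + M + (n i))) := by
        rw [Finset.disjoint_left]
        intro t ht ht'
        rw [Finset.mem_Icc] at ht ht'
        omega
      have card2 : (Finset.Icc ((i : ℤ) + M + 1) ((i : ℤ) + M + (n i))).card = n i := by
        rw [Int.card_Icc]; omega
      have h1 : ∏ t ∈ Finset.Icc (1 : ℤ) (M : ℤ), P (Zbar t ⁻¹' {bs t})
          = ENNReal.ofReal p ^ M := by
        have hc : ∀ t ∈ Finset.Icc (1 : ℤ) (M : ℤ),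
            P (Zbar t ⁻¹' {bs t}) = ENNReal.ofReal p := by
          intro t ht
          rw [Finset.mem_Icc] at ht
          have hb : bs t = true := by
            simp only [hbs]; exact decide_eq_true ht.2
          rw [hb, htrue]
        rw [Finset.prod_congr rfl hc, Finset.prod_const, cardM]
      have h2 : ∏ t ∈ Finset.Icc ((i : ℤ) + M + 1) ((i : ℤ) + M + (n i)),
          P (Zbar t ⁻¹' {bs t}) = ENNReal.ofReal (1 - p) ^ n i := by
        have hc : ∀ t ∈ Finset.Icc ((i : ℤ) + M + 1) ((i : ℤ) + M + (n i)),
            P (Zbar t ⁻¹' {bs t}) = ENNReal.ofReal (1 - p) := by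
          intro t ht
          rw [Finset.mem_Icc] at ht
          have hb : bs t = false := by
            simp only [hbs]; exact decide_eq_false (by omega)
          rw [hb, hfalse]
        rw [Finset.prod_congr rfl hc, Finset.prod_const, card2]
      rw [hGi, hblock, hFi, Finset.prod_union hdisj, h1, h2, hpow,
        ENNReal.ofReal_pow hp0.le, ENNReal.ofReal_pow (by linarith)]
    · have hGi : G i = ∅ := by simp only [hG]; exact if_neg h
      have hpow : powInvBar (1 - p) ℓbar (i + (M - 1)) = 0 := by
        unfold powInvBar
        rw [dif_neg h]
      rw [hGi, hpow, measure_empty, ENNReal.ofReal_zero, mul_zero]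
  have hsub : {ω | ∃ i, 1 ≤ i ∧ D i ω = 0} ∩ A ⊆ ⋃ i : ℕ, G i := by
    rintro ω ⟨⟨i0, hi0, hDi0⟩, hωA⟩
    have hA' : ∀ t : ℤ, 1 ≤ t → t ≤ (M : ℤ) → Zbar t ω = true := by
      intro t h1 h2
      have := Set.mem_iInter₂.1 hωA t (Finset.mem_Icc.2 ⟨h1, h2⟩)
      simpa using this
    have claim1 : ∀ i, 1 ≤ i → i ≤ M → D i ω = i := by
      intro i
      induction i using Nat.strong_induction_on with
      | _ i ih =>
        intro h1 h2
        have hset : {l | l < i ∧ D l ω = 0} = {0} := by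
          ext l
          simp only [Set.mem_setOf_eq, Set.mem_singleton_iff]
          constructor
          · rintro ⟨hl, hl0⟩
            by_contra hne
            have := ih l hl (Nat.one_le_iff_ne_zero.2 hne) ((lt_of_lt_of_le hl h2).le)
            omega
          · rintro rfl; exact ⟨h1, hD0 ω⟩
        have hZ : Zbar (i : ℤ) ω = true :=
          hA' i (by exact_mod_cast h1) (by exact_mod_cast h2)
        rw [hDrec i ω h1, hset, csSup_singleton, hLbar, hZ]
        simp
    have hS0 : {i | 1 ≤ i ∧ D i ω = 0}.Nonempty := ⟨i0, hi0, hDi0⟩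
    obtain ⟨hζ1, hζD⟩ := Nat.sInf_mem hS0
    set ζ := sInf {i | 1 ≤ i ∧ D i ω = 0} with hζ
    have hζM : M < ζ := by
      by_contra h
      push_neg at h
      have := claim1 ζ hζ1 h
      omega
    have hmin : ∀ l, 1 ≤ l → l < ζ → D l ω ≠ 0 := by
      intro l h1 hl hD
      exact Nat.notMem_of_lt_sInf hl ⟨h1, hD⟩
    have hsup : sSup {l | l < ζ ∧ D l ω = 0} = 0 := by
      have hset : {l | l < ζ ∧ D l ω = 0} = {0} := by
        ext l
        simp only [Set.mem_setOf_eq, Set.mem_singleton_iff]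
        constructor
        · rintro ⟨hl, h0⟩
          by_contra hne
          exact hmin l (Nat.one_le_iff_ne_zero.2 hne) hl h0
        · rintro rfl; exact ⟨by omega, hD0 ω⟩
      rw [hset, csSup_singleton]
    have hLζ : ζ ≤ Lbar (ζ : ℤ) ω := by
      have h := hDrec ζ ω hζ1
      rw [hsup, hζD] at h
      omega
    have hZζ : Zbar (ζ : ℤ) ω = false := by
      by_contra h
      rw [Bool.not_eq_false] at h
      have h2 := hLbar (ζ : ℤ) ω
      rw [h] at h2
      simp at h2
      omega
    set m := mbar (ζ : ℤ) ω with hm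
    have hLval : Lbar (ζ : ℤ) ω = m + 1 + ℓbar m := by
      rw [hLbar, hZζ]; simp [hm]
    have hmZ : (m : ℤ) = sInf {k : ℤ | Zbar ((ζ : ℤ) - k - 1) ω = true} := by
      rw [hm]; exact_mod_cast hmbar (ζ : ℤ) ω
    have hTmem : ((ζ : ℤ) - M - 1) ∈ {k : ℤ | Zbar ((ζ : ℤ) - k - 1) ω = true} := by
      have hc : (ζ : ℤ) - ((ζ : ℤ) - M - 1) - 1 = (M : ℤ) := by ring
      simp only [Set.mem_setOf_eq, hc]
      exact hA' M (by exact_mod_cast hM) le_rfl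
    have key : m ≤ ζ - M - 1 ∧ ∀ k : ℕ, k < m → Zbar ((ζ : ℤ) - k - 1) ω = false := by
      by_cases hbdd : BddBelow {k : ℤ | Zbar ((ζ : ℤ) - k - 1) ω = true}
      · constructor
        · have h1 : (m : ℤ) ≤ (ζ : ℤ) - M - 1 := by
            rw [hmZ]; exact csInf_le hbdd hTmem
          omega
        · intro k hk
          have hk' : (k : ℤ) < sInf {k : ℤ | Zbar ((ζ : ℤ) - k - 1) ω = true} := by
            rw [← hmZ]; exact_mod_cast hk
          have := notMem_of_lt_csInf hk' hbdd
          simpa using this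
      · have h0 : (m : ℤ) = 0 := by
          rw [hmZ, Int.csInf_of_not_bddBelow hbdd]
        constructor
        · omega
        · intro k hk; omega
    obtain ⟨hmle, hlt⟩ := key
    set j := ζ - m - 1 with hj
    have hjM : M ≤ j := by omega
    have hζeq : ζ = j + m + 1 := by omega
    have hstars : ∀ r : ℕ, 1 ≤ r → r ≤ m + 1 → Zbar ((j : ℤ) + r) ω = false := by
      intro r h1 h2
      rcases eq_or_lt_of_le h2 with h | h
      · have heq : ((j : ℤ) + r) = (ζ : ℤ) := by omega
        rw [heq]; exact hZζ
      · have hk : m - r < m := by omega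
        have hf := hlt (m - r) hk
        have heq : (ζ : ℤ) - ((m - r : ℕ) : ℤ) - 1 = (j : ℤ) + r := by omega
        rwa [heq] at hf
    have hℓm : j ≤ ℓbar m := by
      rw [hLval] at hLζ
      omega
    have hcond : ∃ k, 1 ≤ k ∧ (j - M) + (M - 1) < ℓbar k := by
      refine ⟨max m 1, le_max_right _ _, ?_⟩
      have := hℓmono (le_max_left m 1)
      omega
    refine Set.mem_iUnion.2 ⟨j - M, ?_⟩
    have hnle : n (j - M) ≤ m + 1 := by
      have hmem : max m 1 ∈ {k | 1 ≤ k ∧ (j - M) + (M - 1) < ℓbar k} := by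
        refine ⟨le_max_right _ _, ?_⟩
        have := hℓmono (le_max_left m 1)
        omega
      have h := Nat.sInf_le hmem
      simp only [hn]
      omega
    simp only [hG, if_pos hcond]
    refine Set.mem_iInter₂.2 ?_
    intro t ht
    simp only [hFi, Finset.mem_union] at ht
    simp only [Set.mem_preimage, Set.mem_singleton_iff]
    rcases ht with ht | ht
    · rw [Finset.mem_Icc] at ht
      have hb : bs t = true := by
        simp only [hbs]; exact decide_eq_true ht.2
      rw [hb]
      exact hA' t ht.1 ht.2
    · rw [Finset.mem_Icc] at ht
      have hb : bs t = false := by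
        simp only [hbs]; exact decide_eq_false (by omega)
      rw [hb]
      set r : ℕ := (t - (j : ℤ)).toNat with hr
      have h1r : 1 ≤ r := by omega
      have h2r : r ≤ m + 1 := by omega
      have heq : (j : ℤ) + (r : ℤ) = t := by omega
      rw [← heq]
      exact hstars r h1r h2r
  calc P {ω | ∃ i, 1 ≤ i ∧ D i ω = 0}
      ≤ P (({ω | ∃ i, 1 ≤ i ∧ D i ω = 0} ∩ A) ∪ Aᶜ) := by
        refine measure_mono ?_
        intro ω hω
        by_cases h : ω ∈ A
        · exact Or.inl ⟨hω, h⟩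
        · exact Or.inr h
    _ ≤ P ({ω | ∃ i, 1 ≤ i ∧ D i ω = 0} ∩ A) + P Aᶜ := measure_union_le _ _
    _ ≤ P (⋃ i, G i) + P Aᶜ := add_le_add_left (measure_mono hsub) _
    _ ≤ (∑' i, P (G i)) + P Aᶜ := add_le_add_left (measure_iUnion_le _) _
    _ = _ := by
        rw [hPAc]
        congr 1
        rw [← ENNReal.tsum_mul_left]
        exact tsum_congr fun i => hPG i
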